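/- For every integer n ≥ 2, the quotient of the sum over x from 0 to n of (1/(n + 1)) · (x(x − 1)/(n(n − 1))) by the sum over x from 0 to n of (1/(n + 1)) · (x/n) equals 2/3. (Interpretation: in the conditional-probability model, the conditional probability that both drawn balls are red given that the first drawn ball is red equals 2/3; this is the answer to Litt's puzzle.) -/

import Mathlib

lemma sum_id (n : ℕ) : (∑ x ∈ Finset.range (n + 1), (x : ℚ)) = n * (n + 1) / 2 := by
  induction n with
  | zero => simp
  | succ k ih => rw [Finset.sum_range_succ, ih]; push_cast; ring

lemma sum_sq (n : ℕ) :
    (∑ x ∈ Finset.range (n + 1), (x : ℚ) * ((x : ℚ) - 1)) = (n + 1) * n * (n - 1) / 3 := by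
  induction n with
  | zero => simp
  | succ k ih => rw [Finset.sum_range_succ, ih]; push_cast; ring

/-- For every integer `n ≥ 2`, the quotient of
`∑ x in {0,…,n}, (1/(n+1)) * (x(x-1)/(n(n-1)))` by
`∑ x in {0,…,n}, (1/(n+1)) * (x/n)` equals `2/3`. -/
theorem stmt_4 (n : ℕ) (hn : 2 ≤ n) :
    (∑ x ∈ Finset.range (n + 1),
        (1 / ((n : ℚ) + 1)) * ((x : ℚ) * ((x : ℚ) - 1) / ((n : ℚ) * ((n : ℚ) - 1)))) /
      (∑ x ∈ Finset.range (n + 1), (1 / ((n : ℚ) + 1)) * ((x : ℚ) / (n : ℚ))) = 2 / 3 := by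
  have hn0 : (n : ℚ) ≠ 0 := by positivity
  have hn1 : (n : ℚ) - 1 ≠ 0 := by
    have : (2 : ℚ) ≤ n := by exact_mod_cast hn
    intro h; nlinarith
  have hn2 : (n : ℚ) + 1 ≠ 0 := by positivity
  rw [← Finset.mul_sum, ← Finset.mul_sum]
  simp only [div_eq_mul_inv, ← Finset.sum_mul]
  rw [← div_eq_mul_inv, ← div_eq_mul_inv, sum_id, sum_sq]
  field_simp
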